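/- arXiv:1712.05136 — 2 statements merged into one kernel-verified Lean document; each statement's English description precedes it below -/
import Mathlib

section
/- Let ν > 0, L_p > 0, θ = L_p/ν, let k ≥ 1 be an integer, and let s_1, ..., s_{k+1} be i.i.d. exponential random variables with mean ν, S_k = s_1 + ... + s_k. Define V_k = (L_p - S_k)/s_{k+1} and let A_k be the event {S_k ≤ L_p < S_{k+1}} (equivalently, S_k < L_p and V_k < 1). Then for every x with 0 < x < 1, P(V_k ≤ x | A_k) = (k/L_p) ∫_0^{L_p} ((L_p - u)/L_p)^{k-1} e^{ (u/ν)(1 - 1/x) } du. -/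
open MeasureTheory ProbabilityTheory

namespace VestigeAux
open Real Set
open scoped ENNReal


lemma gammaPDF_conv_exp {r : ℝ} (hr : 0 < r) (n : ℕ) (w : ℝ) :
    ∫⁻ u, gammaPDF (n+1) r u * exponentialPDF r (w - u) =
      gammaPDF (n+1+1) r w := by
  have hae2 : ∀ᵐ u : ℝ, u ≠ 0 ∧ u ≠ w := by
    rw [ae_iff]
    apply measure_mono_null (t := ({0, w} : Set ℝ))
    · intro u hu
      simp only [mem_setOf_eq, not_and_or, not_ne_iff] at hu
      rcases hu with h | h <;> simp [h]
    · exact measure_union_null (measure_singleton _) (measure_singleton _)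
  rcases le_or_gt w 0 with hw | hw
  · have h1 : ∀ᵐ u : ℝ, gammaPDF (n+1) r u * exponentialPDF r (w - u) = 0 := by
      filter_upwards [hae2] with u ⟨h0, _⟩
      rcases lt_or_gt_of_ne h0 with hu | hu
      · rw [gammaPDF_of_neg hu, zero_mul]
      · rw [exponentialPDF_of_neg (by linarith), mul_zero]
    rw [lintegral_congr_ae h1, lintegral_zero]
    rcases lt_or_eq_of_le hw with hw' | hw'
    · rw [gammaPDF_of_neg hw']
    · subst hw'
      rw [gammaPDF_of_nonneg le_rfl, Real.zero_rpow (by push_cast; linarith)]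
      simp
  · -- w > 0
    have hrestrict : ∫⁻ u, gammaPDF (n+1) r u * exponentialPDF r (w - u) =
        ∫⁻ u in Ioo 0 w, gammaPDF (n+1) r u * exponentialPDF r (w - u) := by
      rw [← lintegral_indicator measurableSet_Ioo]
      apply lintegral_congr_ae
      filter_upwards [hae2] with u ⟨h0, hwu⟩
      by_cases hu : u ∈ Ioo 0 w
      · rw [indicator_of_mem hu]
      · rw [indicator_of_notMem hu]
        simp only [mem_Ioo, not_and_or, not_lt] at hu
        rcases hu with h | h
        · rw [gammaPDF_of_neg (lt_of_le_of_ne h h0), zero_mul]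
        · rw [exponentialPDF_of_neg (by
            rcases lt_or_eq_of_le h with h' | h'
            · linarith
            · exact absurd h'.symm hwu), mul_zero]
    rw [hrestrict]
    have hcongr : ∫⁻ u in Ioo 0 w, gammaPDF (n+1) r u * exponentialPDF r (w - u) =
        ∫⁻ u in Ioo 0 w, ENNReal.ofReal
          (r ^ (n+1) / (n.factorial : ℝ) * Real.exp (-(r*w)) * r * u ^ n) := by
      apply setLIntegral_congr_fun measurableSet_Ioo
      intro u hu
      beta_reduce
      rw [gammaPDF_of_nonneg hu.1.le,
        exponentialPDF_of_nonneg (by linarith [hu.2] : (0:ℝ) ≤ w - u),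
        ← ENNReal.ofReal_mul (by
          have h0 : (0:ℝ) < u := hu.1
          exact mul_nonneg (mul_nonneg (div_nonneg (Real.rpow_nonneg hr.le _)
            (Real.Gamma_pos_of_pos (by positivity)).le) (Real.rpow_nonneg h0.le _))
            (Real.exp_pos _).le)]
      congr 1
      have h1 : ((n:ℝ) + 1) = ((n+1 : ℕ) : ℝ) := by push_cast; ring
      rw [add_sub_cancel_right, Real.rpow_natCast, h1, Real.rpow_natCast,
        ← h1, Real.Gamma_nat_eq_factorial]
      have hexp : Real.exp (-(r*u)) * Real.exp (-(r*(w-u))) = Real.exp (-(r*w)) := by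
        rw [← Real.exp_add]; ring_nf
      linear_combination (r^(n+1)/(n.factorial:ℝ) * u^n * r) * hexp
    rw [hcongr]
    -- now compute the lintegral of ofReal
    have hint : IntegrableOn
        (fun u : ℝ => r ^ (n+1) / (n.factorial : ℝ) * Real.exp (-(r*w)) * r * u ^ n)
        (Ioo 0 w) := by
      exact ((Continuous.continuousOn (by continuity)).integrableOn_Icc).mono_set
        Ioo_subset_Icc_self
    rw [← ofReal_integral_eq_lintegral_ofReal hint (by
        filter_upwards [ae_restrict_mem measurableSet_Ioo] with u hu
        have h0 : (0:ℝ) < u := hu.1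
        positivity)]
    rw [← MeasureTheory.integral_Ioc_eq_integral_Ioo,
      ← intervalIntegral.integral_of_le hw.le, intervalIntegral.integral_const_mul,
      integral_pow]
    rw [gammaPDF_of_nonneg hw.le]
    congr 1
    have e3 : Real.Gamma ((n:ℝ)+1+1) = (((n+1).factorial : ℕ) : ℝ) := by
      rw [show ((n:ℝ)+1+1) = ((n+1:ℕ):ℝ)+1 by push_cast; ring]
      exact Real.Gamma_nat_eq_factorial (n+1)
    rw [e3, show (n:ℝ)+1+1-1 = ((n+1:ℕ):ℝ) by push_cast; ring, Real.rpow_natCast,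
      show ((n:ℝ) + 1 + 1) = ((n+2 : ℕ) : ℝ) by push_cast; ring, Real.rpow_natCast,
      Nat.factorial_succ]
    have hnf : (n.factorial : ℝ) ≠ 0 := Nat.cast_ne_zero.2 n.factorial_ne_zero
    have hn1 : ((n:ℝ) + 1) ≠ 0 := by positivity
    push_cast
    field_simp
    ring

lemma gammaMeasure_conv_exp {r : ℝ} (hr : 0 < r) (n : ℕ) (hKEY : ∀ w, ∫⁻ u, gammaPDF (n+1) r u * exponentialPDF r (w - u) = gammaPDF (n+1+1) r w) :
    Measure.map (fun p : ℝ × ℝ => p.1 + p.2)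
      ((gammaMeasure (n+1) r).prod (expMeasure r)) = gammaMeasure (n+1+1) r := by
  have hg : Measurable (gammaPDF (n+1) r) := (measurable_gammaPDFReal _ _).ennreal_ofReal
  have he : Measurable (exponentialPDF r) := (measurable_exponentialPDFReal _).ennreal_ofReal
  haveI : IsProbabilityMeasure (expMeasure r) := isProbabilityMeasure_expMeasure hr
  haveI : IsProbabilityMeasure (gammaMeasure (n+1) r) :=
    isProbabilityMeasure_gammaMeasure (by positivity) hr
  ext A hA
  rw [Measure.map_apply (by fun_prop) hA, Measure.prod_apply (measurable_add hA)]
  have hsec : ∀ u : ℝ, (expMeasure r) (Prod.mk u ⁻¹' ((fun p : ℝ × ℝ => p.1 + p.2) ⁻¹' A)) =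
      ∫⁻ v, A.indicator 1 (u + v) * exponentialPDF r v := by
    intro u
    have hSm : MeasurableSet {v : ℝ | u + v ∈ A} := (measurable_const_add u) hA
    rw [show Prod.mk u ⁻¹' ((fun p : ℝ × ℝ => p.1 + p.2) ⁻¹' A) = {v : ℝ | u + v ∈ A} from rfl]
    rw [show expMeasure r = volume.withDensity (exponentialPDF r) from rfl,
      withDensity_apply _ hSm, ← lintegral_indicator hSm]
    apply lintegral_congr
    intro v
    by_cases hv : u + v ∈ A <;> simp [indicator, hv]
  rw [lintegral_congr hsec,
    show gammaMeasure (n+1) r = volume.withDensity (gammaPDF (n+1) r) from rfl,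
    lintegral_withDensity_eq_lintegral_mul volume hg (by
      apply Measurable.lintegral_prod_right
      apply Measurable.mul
      · exact (measurable_one.indicator hA).comp (measurable_fst.add measurable_snd)
      · exact he.comp measurable_snd)]
  simp only [Pi.mul_apply]
  have hinner_meas : ∀ u : ℝ, Measurable fun v : ℝ => A.indicator 1 (u + v) * exponentialPDF r v :=
    fun u => ((measurable_one.indicator hA).comp (measurable_const_add u)).mul he
  have step1 : ∫⁻ u, gammaPDF (n+1) r u * ∫⁻ v, A.indicator 1 (u + v) * exponentialPDF r v =
      ∫⁻ u, ∫⁻ w, gammaPDF (n+1) r u * (A.indicator 1 w * exponentialPDF r (w - u)) := by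
    apply lintegral_congr
    intro u
    rw [← lintegral_const_mul _ (hinner_meas u)]
    have := lintegral_add_right_eq_self (μ := volume)
      (fun w => gammaPDF (n+1) r u * (A.indicator 1 w * exponentialPDF r (w - u))) u
    rw [← this]
    apply lintegral_congr
    intro v
    simp only [add_sub_cancel_right]
    rw [add_comm v u]
  rw [step1, lintegral_lintegral_swap (by
    apply Measurable.aemeasurable
    apply Measurable.mul
    · exact hg.comp measurable_fst
    · exact ((measurable_one.indicator hA).comp measurable_snd).mul
        (he.comp (measurable_snd.sub measurable_fst)))]
  have step2 : ∫⁻ w, ∫⁻ u, gammaPDF (n+1) r u * (A.indicator 1 w * exponentialPDF r (w - u)) =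
      ∫⁻ w, A.indicator 1 w * gammaPDF (n+1+1) r w := by
    apply lintegral_congr
    intro w
    calc ∫⁻ u, gammaPDF (n+1) r u * (A.indicator 1 w * exponentialPDF r (w - u))
        = ∫⁻ u, A.indicator 1 w * (gammaPDF (n+1) r u * exponentialPDF r (w - u)) := by
          apply lintegral_congr; intro u; ring
      _ = A.indicator 1 w * ∫⁻ u, gammaPDF (n+1) r u * exponentialPDF r (w - u) :=
          lintegral_const_mul _ (hg.mul (he.comp (measurable_const.sub measurable_id)))
      _ = A.indicator 1 w * gammaPDF (n+1+1) r w := by rw [hKEY w]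
  rw [step2,
    show gammaMeasure (n+1+1) r = volume.withDensity (gammaPDF (n+1+1) r) from rfl,
    withDensity_apply _ hA, ← lintegral_indicator hA]
  apply lintegral_congr
  intro w
  by_cases hw : w ∈ A <;> simp [indicator, hw]

lemma expMeasure_Ioi {r : ℝ} (hr : 0 < r) {t : ℝ} (ht : 0 ≤ t) :
    expMeasure r (Ioi t) = ENNReal.ofReal (Real.exp (-(r*t))) := by
  haveI : IsProbabilityMeasure (expMeasure r) := isProbabilityMeasure_expMeasure hr
  have hIic : expMeasure r (Iic t) = ENNReal.ofReal (1 - Real.exp (-(r*t))) := by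
    rw [show expMeasure r = volume.withDensity (exponentialPDF r) from rfl,
      withDensity_apply _ measurableSet_Iic, lintegral_exponentialPDF_eq_antiDeriv hr t,
      if_pos ht]
  have : Ioi t = (Iic t)ᶜ := by ext v; simp
  rw [this, measure_compl measurableSet_Iic (measure_ne_top _ _), hIic, measure_univ]
  rw [← ENNReal.ofReal_one, ← ENNReal.ofReal_sub _ (by
    have := Real.exp_le_one_iff.2 (by nlinarith : -(r*t) ≤ 0); linarith [Real.exp_pos (-(r*t))])]
  congr 1
  ring

lemma expMeasure_Ici {r : ℝ} (hr : 0 < r) {t : ℝ} (ht : 0 ≤ t) :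
    expMeasure r (Ici t) = ENNReal.ofReal (Real.exp (-(r*t))) := by
  rw [← expMeasure_Ioi hr ht]
  apply le_antisymm
  · calc expMeasure r (Ici t) ≤ expMeasure r (Ioi t ∪ {t}) := by
          apply measure_mono; intro v hv
          rcases eq_or_lt_of_le (Set.mem_Ici.mp hv) with h | h
          · exact Or.inr h.symm
          · exact Or.inl h
      _ ≤ expMeasure r (Ioi t) + expMeasure r {t} := measure_union_le _ _
      _ = expMeasure r (Ioi t) := by
          rw [show expMeasure r = volume.withDensity (exponentialPDF r) from rfl,
            withDensity_apply _ (measurableSet_singleton t),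
            Measure.restrict_eq_zero.mpr (measure_singleton t), lintegral_zero_measure, add_zero]
  · exact measure_mono Ioi_subset_Ici_self

lemma prod_eval {r : ℝ} (hr : 0 < r) (n : ℕ) {Lp : ℝ} (hLp : 0 < Lp) {x : ℝ} (hx : 0 < x)
    (T : Set (ℝ × ℝ)) (hT : MeasurableSet T)
    (hsec : ∀ u ∈ Ioo (0:ℝ) Lp, expMeasure r (Prod.mk u ⁻¹' T)
      = ENNReal.ofReal (Real.exp (-(r*(Lp-u)/x))))
    (hempty : ∀ u : ℝ, Lp < u → Prod.mk u ⁻¹' T = ∅) :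
    ((gammaMeasure (n+1) r).prod (expMeasure r)) T =
      ENNReal.ofReal (∫ u in (0:ℝ)..Lp,
        gammaPDFReal (n+1) r u * Real.exp (-(r*(Lp-u)/x))) := by
  haveI : IsProbabilityMeasure (expMeasure r) := isProbabilityMeasure_expMeasure hr
  haveI : IsProbabilityMeasure (gammaMeasure (n+1) r) :=
    isProbabilityMeasure_gammaMeasure (by positivity) hr
  have hg : Measurable (gammaPDF (n+1) r) := (measurable_gammaPDFReal _ _).ennreal_ofReal
  have hae2 : ∀ᵐ u : ℝ, u ≠ 0 ∧ u ≠ Lp := by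
    rw [ae_iff]
    apply measure_mono_null (t := ({0, Lp} : Set ℝ))
    · intro u hu
      simp only [mem_setOf_eq, not_and_or, not_ne_iff] at hu
      rcases hu with h | h <;> simp [h]
    · exact measure_union_null (measure_singleton _) (measure_singleton _)
  rw [Measure.prod_apply hT,
    show gammaMeasure (n+1) r = volume.withDensity (gammaPDF (n+1) r) from rfl,
    lintegral_withDensity_eq_lintegral_mul volume hg (measurable_measure_prodMk_left hT)]
  simp only [Pi.mul_apply]
  have hres : ∫⁻ u, gammaPDF (n+1) r u * expMeasure r (Prod.mk u ⁻¹' T) =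
      ∫⁻ u in Ioo 0 Lp, ENNReal.ofReal
        (gammaPDFReal (n+1) r u * Real.exp (-(r*(Lp-u)/x))) := by
    rw [← lintegral_indicator measurableSet_Ioo]
    apply lintegral_congr_ae
    filter_upwards [hae2] with u ⟨h0, hLp'⟩
    by_cases hu : u ∈ Ioo 0 Lp
    · rw [indicator_of_mem hu, hsec u hu, gammaPDF,
        ← ENNReal.ofReal_mul (gammaPDFReal_nonneg (by positivity) hr u)]
    · rw [indicator_of_notMem hu]
      simp only [mem_Ioo, not_and_or, not_lt] at hu
      rcases hu with h | h
      · rw [gammaPDF_of_neg (lt_of_le_of_ne h h0), zero_mul]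
      · rw [hempty u (lt_of_le_of_ne h (Ne.symm hLp')), measure_empty, mul_zero]
  rw [hres]
  have hcont : ContinuousOn (fun u : ℝ =>
      r ^ (n+1) / (n.factorial : ℝ) * u ^ n * Real.exp (-(r*u)) * Real.exp (-(r*(Lp-u)/x)))
      (Icc 0 Lp) := (Continuous.continuousOn (by continuity))
  have heq : EqOn (fun u : ℝ => gammaPDFReal (n+1) r u * Real.exp (-(r*(Lp-u)/x)))
      (fun u : ℝ =>
      r ^ (n+1) / (n.factorial : ℝ) * u ^ n * Real.exp (-(r*u)) * Real.exp (-(r*(Lp-u)/x)))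
      (Icc 0 Lp) := by
    intro u hu
    simp only [gammaPDFReal, if_pos hu.1]
    rw [add_sub_cancel_right, Real.rpow_natCast,
      show ((n:ℝ) + 1) = ((n+1 : ℕ) : ℝ) by push_cast; ring, Real.rpow_natCast,
      show ((n+1 : ℕ) : ℝ) = (n:ℝ)+1 by push_cast; ring, Real.Gamma_nat_eq_factorial]
  have hint : IntegrableOn (fun u : ℝ => gammaPDFReal (n+1) r u * Real.exp (-(r*(Lp-u)/x)))
      (Ioo 0 Lp) := by
    apply IntegrableOn.congr_fun _ (fun u hu => (heq (Ioo_subset_Icc_self hu)).symm)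
      measurableSet_Ioo
    exact (hcont.integrableOn_Icc).mono_set Ioo_subset_Icc_self
  rw [← ofReal_integral_eq_lintegral_ofReal hint (by
      filter_upwards with u
      exact mul_nonneg (gammaPDFReal_nonneg (by positivity) hr u) (Real.exp_pos _).le)]
  rw [← MeasureTheory.integral_Ioc_eq_integral_Ioo, ← intervalIntegral.integral_of_le hLp.le]

lemma gamma_unfold {r Lp : ℝ} (hLp : 0 < Lp) (n : ℕ) {u : ℝ} (hu : u ∈ Icc 0 Lp) :
    gammaPDFReal (n+1) r u = r ^ (n+1) / (n.factorial : ℝ) * u ^ n * Real.exp (-(r*u)) := by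
  simp only [gammaPDFReal, if_pos hu.1]
  rw [add_sub_cancel_right, Real.rpow_natCast,
    show ((n:ℝ) + 1) = ((n+1 : ℕ) : ℝ) by push_cast; ring, Real.rpow_natCast,
    show ((n+1 : ℕ) : ℝ) = (n:ℝ)+1 by push_cast; ring, Real.Gamma_nat_eq_factorial]

lemma interval_id {r Lp x : ℝ} (hr : 0 < r) (hLp : 0 < Lp) (hx : 0 < x) (n : ℕ) :
    ∫ u in (0:ℝ)..Lp, gammaPDFReal (n+1) r u * Real.exp (-(r*(Lp-u)/x)) =
    (Real.exp (-(r*Lp)) * (r*Lp)^(n+1) / ((n+1).factorial : ℝ)) *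
      ((((n:ℝ)+1)/Lp) * ∫ u in (0:ℝ)..Lp, ((Lp-u)/Lp)^n * Real.exp ((u*r)*(1-1/x))) := by
  have hEq1 : ∫ u in (0:ℝ)..Lp, gammaPDFReal (n+1) r u * Real.exp (-(r*(Lp-u)/x))
      = ∫ u in (0:ℝ)..Lp, (Real.exp (-(r*Lp)) * (r^(n+1)/(n.factorial:ℝ)))
          * (u ^ n * Real.exp (((Lp - u)*r)*(1-1/x))) := by
    apply intervalIntegral.integral_congr
    intro u hu
    rw [uIcc_of_le hLp.le] at hu
    dsimp only
    rw [gamma_unfold hLp n hu]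
    have hexp : Real.exp (-(r*u)) * Real.exp (-(r*(Lp-u)/x))
        = Real.exp (-(r*Lp)) * Real.exp (((Lp-u)*r)*(1-1/x)) := by
      rw [← Real.exp_add, ← Real.exp_add]
      congr 1
      field_simp
      ring
    calc r ^ (n+1) / (n.factorial : ℝ) * u ^ n * Real.exp (-(r*u)) * Real.exp (-(r*(Lp-u)/x))
        = (r ^ (n+1) / (n.factorial : ℝ) * u ^ n)
            * (Real.exp (-(r*u)) * Real.exp (-(r*(Lp-u)/x))) := by ring
      _ = (r ^ (n+1) / (n.factorial : ℝ) * u ^ n)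
            * (Real.exp (-(r*Lp)) * Real.exp (((Lp-u)*r)*(1-1/x))) := by rw [hexp]
      _ = _ := by ring
  have hsub : ∫ u in (0:ℝ)..Lp, ((Lp-u)/Lp)^n * Real.exp ((u*r)*(1-1/x))
      = ∫ u in (0:ℝ)..Lp, (u/Lp)^n * Real.exp (((Lp-u)*r)*(1-1/x)) := by
    have h := intervalIntegral.integral_comp_sub_left (a := (0:ℝ)) (b := Lp)
      (fun u => (u/Lp)^n * Real.exp (((Lp-u)*r)*(1-1/x))) Lp
    simp only [sub_self, sub_zero] at h
    rw [← h]
    apply intervalIntegral.integral_congr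
    intro u _
    simp only [sub_sub_cancel]
  rw [hEq1, hsub, intervalIntegral.integral_const_mul]
  have hpull : ∫ u in (0:ℝ)..Lp, (u/Lp)^n * Real.exp (((Lp-u)*r)*(1-1/x))
      = (1/Lp^n) * ∫ u in (0:ℝ)..Lp, u^n * Real.exp (((Lp-u)*r)*(1-1/x)) := by
    rw [← intervalIntegral.integral_const_mul]
    apply intervalIntegral.integral_congr
    intro u _
    dsimp only
    rw [div_pow]
    ring
  rw [hpull, Nat.factorial_succ, mul_pow]
  have hf : (n.factorial : ℝ) ≠ 0 := Nat.cast_ne_zero.2 n.factorial_ne_zero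
  have hLn : (Lp:ℝ)^n ≠ 0 := pow_ne_zero _ hLp.ne'
  push_cast
  field_simp
  have e : ∀ u : ℝ, r * (x - 1) * (Lp - u) = r * (Lp - u) * (x - 1) := fun u => by ring
  simp only [e]
  ring


lemma int_pow_sub {Lp : ℝ} (hLp : 0 < Lp) (n : ℕ) :
    ∫ u in (0:ℝ)..Lp, ((Lp-u)/Lp)^n = Lp/((n:ℝ)+1) := by
  have h := intervalIntegral.integral_comp_sub_left (a := (0:ℝ)) (b := Lp)
    (fun u => (u/Lp)^n) Lp
  simp only [sub_self, sub_zero] at h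
  have h2 : ∫ u in (0:ℝ)..Lp, ((Lp-u)/Lp)^n = ∫ u in (0:ℝ)..Lp, (u/Lp)^n := h
  rw [h2]
  have h3 : ∫ u in (0:ℝ)..Lp, (u/Lp)^n = (1/Lp^n) * ∫ u in (0:ℝ)..Lp, u^n := by
    rw [← intervalIntegral.integral_const_mul]
    apply intervalIntegral.integral_congr
    intro u _
    dsimp only
    rw [div_pow]
    ring
  rw [h3, integral_pow]
  have hLn : (Lp:ℝ)^n ≠ 0 := pow_ne_zero _ hLp.ne'
  have hn1 : ((n:ℝ)+1) ≠ 0 := by positivity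
  field_simp
  ring

lemma interval_integrable_den {r Lp x : ℝ} (hLp : 0 < Lp) (n : ℕ) :
    IntervalIntegrable
      (fun u : ℝ => gammaPDFReal (n+1) r u * Real.exp (-(r*(Lp-u)/x))) volume 0 Lp := by
  rw [intervalIntegrable_iff, uIoc_of_le hLp.le]
  have hcont : ContinuousOn (fun u : ℝ =>
      r ^ (n+1) / (n.factorial : ℝ) * u ^ n * Real.exp (-(r*u)) * Real.exp (-(r*(Lp-u)/x)))
      (Icc 0 Lp) := Continuous.continuousOn (by continuity)
  apply IntegrableOn.congr_fun _
    (fun u hu => by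
      rw [gamma_unfold hLp n (Ioc_subset_Icc_self hu)]) measurableSet_Ioc
  exact (hcont.integrableOn_Icc).mono_set Ioc_subset_Icc_self

end VestigeAux

open VestigeAux

/-- Conditional CDF of the vestige time `V_k = (L_p - S_k)/s_{k+1}` given the event
`A_k = {S_k ≤ L_p < S_{k+1}}`: for `0 < x < 1`,
`P(V_k ≤ x | A_k) = (k/L_p) ∫_0^{L_p} ((L_p-u)/L_p)^{k-1} e^{(u/ν)(1-1/x)} du`.
Here `s` is `0`-indexed, so `s_{k+1}` is `s k` and `S_k = Σ_{i<k} s_i`. -/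
theorem vestige_Vk_conditional_cdf_given_Ak
    {Ω : Type*} [MeasurableSpace Ω] (μ : Measure Ω) [IsProbabilityMeasure μ]
    (ν Lp θ : ℝ) (hν : 0 < ν) (hLp : 0 < Lp) (hθ : θ = Lp / ν)
    (k : ℕ) (hk : 1 ≤ k)
    (s : ℕ → Ω → ℝ) (hmeas : ∀ n, Measurable (s n))
    (hindep : iIndepFun s μ)
    (hdist : ∀ n, Measure.map (s n) μ = expMeasure (1 / ν))
    (S : ℕ → Ω → ℝ) (hS : ∀ m ω, S m ω = ∑ i ∈ Finset.range m, s i ω)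
    (V : ℕ → Ω → ℝ) (hV : ∀ m ω, V m ω = (Lp - S m ω) / s m ω) :
    ∀ x : ℝ, 0 < x → x < 1 →
      μ[|{ω | S k ω ≤ Lp ∧ Lp < S (k + 1) ω}] {ω | V k ω ≤ x} =
        ENNReal.ofReal ((k / Lp) *
          ∫ u in (0 : ℝ)..Lp, ((Lp - u) / Lp) ^ (k - 1) *
            Real.exp ((u / ν) * (1 - 1 / x))) := by
  intro x hx0 hx1
  set r : ℝ := 1/ν with hrdef
  have hr : 0 < r := by positivity
  -- basic measurability
  have hSfun : ∀ m, S m = ∑ i ∈ Finset.range m, s i := fun m => funext fun ω => by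
    rw [hS]; simp [Finset.sum_apply]
  have hSlam : ∀ m, S m = fun ω => ∑ i ∈ Finset.range m, s i ω := fun m => funext (hS m)
  have hmeasS : ∀ m, Measurable (S m) := fun m => by
    rw [hSlam m]; exact Finset.measurable_sum _ (fun i _ => hmeas i)
  have haddS : ∀ m ω, S (m+1) ω = S m ω + s m ω := fun m ω => by
    rw [hS, hS, Finset.sum_range_succ]
  -- independence of S m and s m
  have hindepSm : ∀ m, IndepFun (S m) (s m) μ := fun m => by
    rw [hSfun m]; exact hindep.indepFun_sum_range_succ hmeas m
  have hpair : ∀ m, Measure.map (fun ω => (S m ω, s m ω)) μ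
      = (Measure.map (S m) μ).prod (expMeasure r) := fun m => by
    rw [← hdist m]
    exact (indepFun_iff_map_prod_eq_prod_map_map
      (hmeasS m).aemeasurable (hmeas m).aemeasurable).1 (hindepSm m)
  -- law of S (m+1) is Gamma (m+1)
  have hmap : ∀ m : ℕ, Measure.map (S (m+1)) μ = gammaMeasure (m+1) r := by
    intro m
    induction m with
    | zero =>
      have h1 : S 1 = s 0 := funext fun ω => by rw [hS]; simp
      rw [h1, hdist 0]
      show gammaMeasure 1 r = gammaMeasure ((0:ℕ)+1) r
      norm_num
    | succ m ih =>
      have h2 : S (m+1+1) = (fun p : ℝ × ℝ => p.1 + p.2) ∘ (fun ω => (S (m+1) ω, s (m+1) ω)) :=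
        funext fun ω => haddS (m+1) ω
      rw [h2, ← Measure.map_map (by fun_prop) ((hmeasS (m+1)).prodMk (hmeas (m+1))),
        hpair (m+1), ih, gammaMeasure_conv_exp hr m (gammaPDF_conv_exp hr m)]
      congr 1
      push_cast
      ring
  obtain ⟨n, rfl⟩ : ∃ n, k = n + 1 := ⟨k - 1, (Nat.succ_pred_eq_of_pos hk).symm⟩
  set k := n + 1 with hkdef
  have hJ : Measure.map (fun ω => (S k ω, s k ω)) μ
      = (gammaMeasure (n+1) r).prod (expMeasure r) := by
    rw [hpair k, hmap n]
  -- the events as preimages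
  set pair : Ω → ℝ × ℝ := fun ω => (S k ω, s k ω) with hpairdef
  have hpairmeas : Measurable pair := (hmeasS k).prodMk (hmeas k)
  set TA : Set (ℝ × ℝ) := {p | p.1 ≤ Lp ∧ Lp < p.1 + p.2} with hTAdef
  set TB : Set (ℝ × ℝ) := {p | (p.1 ≤ Lp ∧ Lp < p.1 + p.2) ∧ (Lp - p.1)/p.2 ≤ x} with hTBdef
  have hTA : MeasurableSet TA :=
    (measurableSet_le measurable_fst measurable_const).inter
      (measurableSet_lt measurable_const (measurable_fst.add measurable_snd))
  have hTB : MeasurableSet TB :=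
    hTA.inter (measurableSet_le ((measurable_const.sub measurable_fst).div measurable_snd)
      measurable_const)
  have hA : {ω | S k ω ≤ Lp ∧ Lp < S (k+1) ω} = pair ⁻¹' TA := by
    ext ω
    simp only [Set.mem_setOf_eq, Set.mem_preimage, hTAdef, hpairdef]
    rw [haddS k ω]
  have hB : {ω | S k ω ≤ Lp ∧ Lp < S (k+1) ω} ∩ {ω | V k ω ≤ x} = pair ⁻¹' TB := by
    ext ω
    simp only [Set.mem_inter_iff, Set.mem_setOf_eq, Set.mem_preimage, hTBdef, hpairdef]
    rw [haddS k ω, hV k ω]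
  -- compute the two measures
  have hμA : μ {ω | S k ω ≤ Lp ∧ Lp < S (k+1) ω} =
      ENNReal.ofReal (∫ u in (0:ℝ)..Lp,
        gammaPDFReal (n+1) r u * Real.exp (-(r*(Lp-u)/1))) := by
    rw [hA, ← Measure.map_apply hpairmeas hTA, hJ]
    apply prod_eval hr n hLp one_pos TA hTA
    · intro u hu
      have hsec : Prod.mk u ⁻¹' TA = Set.Ioi (Lp - u) := by
        ext v
        simp only [Set.mem_preimage, hTAdef, Set.mem_setOf_eq, Set.mem_Ioi]
        constructor
        · rintro ⟨_, h2⟩; linarith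
        · intro h; exact ⟨hu.2.le, by linarith⟩
      rw [hsec, expMeasure_Ioi hr (by linarith [hu.2] : (0:ℝ) ≤ Lp - u), div_one]
    · intro u hu
      ext v
      simp only [Set.mem_preimage, hTAdef, Set.mem_setOf_eq, Set.mem_empty_iff_false, iff_false]
      rintro ⟨h1, _⟩
      linarith
  have hμB : μ ({ω | S k ω ≤ Lp ∧ Lp < S (k+1) ω} ∩ {ω | V k ω ≤ x}) =
      ENNReal.ofReal (∫ u in (0:ℝ)..Lp,
        gammaPDFReal (n+1) r u * Real.exp (-(r*(Lp-u)/x))) := by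
    rw [hB, ← Measure.map_apply hpairmeas hTB, hJ]
    apply prod_eval hr n hLp hx0 TB hTB
    · intro u hu
      have h0 : (0:ℝ) < Lp - u := by linarith [hu.2]
      have hsec : Prod.mk u ⁻¹' TB = Set.Ici ((Lp - u)/x) := by
        ext v
        simp only [Set.mem_preimage, hTBdef, Set.mem_setOf_eq, Set.mem_Ici]
        constructor
        · rintro ⟨⟨_, h2⟩, h3⟩
          have hv : 0 < v := by linarith
          rw [div_le_iff₀ hv] at h3
          rw [div_le_iff₀ hx0]
          nlinarith
        · intro hv
          have hgt : Lp - u < (Lp - u)/x := by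
            rw [lt_div_iff₀ hx0]
            nlinarith
          have hv0 : 0 < v := lt_of_lt_of_le (lt_trans h0 hgt) hv
          refine ⟨⟨hu.2.le, by linarith⟩, ?_⟩
          rw [div_le_iff₀ hv0]
          rw [div_le_iff₀ hx0] at hv
          nlinarith
      rw [hsec, expMeasure_Ici hr (by positivity), mul_div_assoc]
    · intro u hu
      ext v
      simp only [Set.mem_preimage, hTBdef, Set.mem_setOf_eq, Set.mem_empty_iff_false, iff_false]
      rintro ⟨⟨h1, _⟩, _⟩
      linarith
  -- conditional probability
  have hAmeas : MeasurableSet {ω | S k ω ≤ Lp ∧ Lp < S (k+1) ω} := by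
    rw [hA]; exact hpairmeas hTA
  rw [ProbabilityTheory.cond_apply hAmeas, hμA, hμB]
  -- final real computation
  set D : ℝ := Real.exp (-(r*Lp)) * (r*Lp)^(n+1) / ((n+1).factorial : ℝ) with hDdef
  have hD : 0 < D := by positivity
  set I : ℝ := ∫ u in (0:ℝ)..Lp, ((Lp-u)/Lp)^n * Real.exp ((u*r)*(1-1/x)) with hIdef
  have hden : (∫ u in (0:ℝ)..Lp, gammaPDFReal (n+1) r u * Real.exp (-(r*(Lp-u)/1))) = D := by
    rw [interval_id hr hLp one_pos n]
    have h1 : ∫ u in (0:ℝ)..Lp, ((Lp-u)/Lp)^n * Real.exp ((u*r)*(1-1/1)) =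
        ∫ u in (0:ℝ)..Lp, ((Lp-u)/Lp)^n := by
      apply intervalIntegral.integral_congr
      intro u _
      norm_num
    rw [h1, int_pow_sub hLp n, hDdef]
    have hn1 : ((n:ℝ)+1) ≠ 0 := by positivity
    field_simp
  have hnum : (∫ u in (0:ℝ)..Lp, gammaPDFReal (n+1) r u * Real.exp (-(r*(Lp-u)/x))) =
      D * (((n:ℝ)+1)/Lp * I) := by
    rw [interval_id hr hLp hx0 n]
  have hRT : (((k:ℕ):ℝ) / Lp) * (∫ u in (0 : ℝ)..Lp, ((Lp - u) / Lp) ^ (k - 1) *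
      Real.exp ((u / ν) * (1 - 1 / x))) = ((n:ℝ)+1)/Lp * I := by
    have hk1 : k - 1 = n := by omega
    have hcast : ((k:ℕ):ℝ) = (n:ℝ)+1 := by rw [hkdef]; push_cast; ring
    rw [hk1, hcast, hIdef]
    congr 1
    apply intervalIntegral.integral_congr
    intro u _
    rw [hrdef]
    ring_nf
  rw [hden, hnum, ENNReal.ofReal_mul hD.le, ← mul_assoc,
    ENNReal.inv_mul_cancel (by simp [ENNReal.ofReal_eq_zero]; exact hD)
      ENNReal.ofReal_ne_top, one_mul, hRT]
end

section
/- Let ν > 0, L_p > 0, θ = L_p/ν, let k ≥ 1 be an integer, and let s_1, ..., s_{k+1} be i.i.d. exponential random variables with mean ν, S_k = s_1 + ... + s_k. Define V_k = (L_p - S_k)/s_{k+1} and let A_k be the event {S_k ≤ L_p < S_{k+1}}. Then the conditional expectation E[V_k | A_k] = 1 - (k/L_p) ∫_0^1 ∫_0^{L_p} ((L_p - u)/L_p)^{k-1} e^{ (u/ν)(1 - 1/x) } du dx. -/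
open scoped ENNReal NNReal
open MeasureTheory ProbabilityTheory Real Set Filter Topology

lemma integrableOn_of_bounded' {A : Set ℝ} (hA : MeasurableSet A) (hfin : volume A < ⊤)
    {f : ℝ → ℝ} (hf : Measurable f) {C : ℝ} (hb : ∀ x ∈ A, |f x| ≤ C) : IntegrableOn f A := by
  have hC : IntegrableOn (fun _ => C) A volume := integrableOn_const hfin.ne
  refine Integrable.mono' hC hf.aestronglyMeasurable.restrict ?_
  rw [ae_restrict_iff' hA]; exact ae_of_all _ hb

lemma mul_exp_neg_le_one {z : ℝ} (hz : 0 ≤ z) : z * Real.exp (-z) ≤ 1 := by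
  rw [Real.exp_neg, mul_inv_le_iff₀ (Real.exp_pos z), one_mul]
  linarith [Real.add_one_le_exp z]

lemma ibp_key (a : ℝ) (ha : 0 ≤ a) :
    ∫ x in (0:ℝ)..1, (1 + a/x) * Real.exp (a*(1-1/x)) = 1 := by
  have hmeas : Measurable fun x : ℝ => (1 + a/x) * Real.exp (a*(1-1/x)) := by fun_prop
  have hbd : ∀ x ∈ Ioc (0:ℝ) 1, |(1 + a/x) * Real.exp (a*(1-1/x))| ≤ 1 + Real.exp a := by
    intro x hx
    have hx0 : 0 < x := hx.1
    have hax : 0 ≤ a / x := div_nonneg ha hx0.le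
    have he : Real.exp (a*(1-1/x)) ≤ 1 := by
      apply Real.exp_le_one_iff.2
      have : 1 ≤ 1/x := by rw [le_div_iff₀ hx0]; linarith [hx.2]
      nlinarith
    have hsplit : (1 + a/x) * Real.exp (a*(1-1/x))
        = Real.exp (a*(1-1/x)) + (a/x) * Real.exp (a*(1-1/x)) := by ring
    have h2 : (a/x) * Real.exp (a*(1-1/x)) ≤ Real.exp a := by
      have : a*(1-1/x) = a + -(a/x) := by field_simp; ring
      rw [this, Real.exp_add, ← mul_assoc, mul_comm (a/x) (Real.exp a), mul_assoc]
      calc Real.exp a * (a/x * Real.exp (-(a/x))) ≤ Real.exp a * 1 := by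
            exact mul_le_mul_of_nonneg_left (mul_exp_neg_le_one hax) (Real.exp_pos a).le
        _ = Real.exp a := mul_one _
    rw [abs_of_nonneg (by positivity), hsplit]
    linarith
  have hint : IntervalIntegrable (fun x => (1 + a/x) * Real.exp (a*(1-1/x))) volume 0 1 := by
    rw [intervalIntegrable_iff, uIoc_of_le zero_le_one]
    exact integrableOn_of_bounded' measurableSet_Ioc (by simp) hmeas hbd
  have hcont : ContinuousOn (fun x : ℝ => x * Real.exp (a - a/x)) (Icc 0 1) := by
    intro x hx
    rcases eq_or_ne x 0 with rfl | hx0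
    · have h0 : (fun x : ℝ => x * Real.exp (a - a/x)) 0 = 0 := by simp
      rw [ContinuousWithinAt]
      simp only [zero_mul, div_zero, sub_zero]
      apply squeeze_zero' (f := fun x : ℝ => x * Real.exp (a - a/x))
        (g := fun x : ℝ => x * Real.exp a)
      · filter_upwards [self_mem_nhdsWithin] with y hy
        exact mul_nonneg hy.1 (Real.exp_pos _).le
      · filter_upwards [self_mem_nhdsWithin] with y hy
        rcases eq_or_ne y 0 with rfl | hy0
        · simp
        · have hy0' : 0 < y := lt_of_le_of_ne hy.1 (Ne.symm hy0)
          have : Real.exp (a - a/y) ≤ Real.exp a :=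
            Real.exp_le_exp.2 (by have := div_nonneg ha hy0'.le; linarith)
          exact mul_le_mul_of_nonneg_left this hy.1
      · have : Tendsto (fun x : ℝ => x * Real.exp a) (𝓝[Icc 0 1] 0) (𝓝 (0 * Real.exp a)) :=
          (tendsto_id.mul tendsto_const_nhds).mono_left nhdsWithin_le_nhds
        simpa using this
    · apply ContinuousAt.continuousWithinAt
      have : ContinuousAt (fun x : ℝ => a - a/x) x :=
        continuousAt_const.sub (continuousAt_const.div continuousAt_id hx0)
      exact continuousAt_id.mul (Real.continuous_exp.continuousAt.comp this)
  have hderiv : ∀ x ∈ Ioo (0:ℝ) 1, HasDerivWithinAt (fun x : ℝ => x * Real.exp (a - a/x))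
      ((1 + a/x) * Real.exp (a*(1-1/x))) (Ioi x) x := by
    intro x hx
    have hx0 : x ≠ 0 := ne_of_gt hx.1
    have hu : HasDerivAt (fun x : ℝ => a - a/x) (a * (x^2)⁻¹) x := by
      have h1 : HasDerivAt (fun x : ℝ => a * x⁻¹) (a * (-(x^2)⁻¹)) x :=
        (hasDerivAt_inv hx0).const_mul a
      have h2 : HasDerivAt (fun x : ℝ => a - a * x⁻¹) (0 - a * (-(x^2)⁻¹)) x :=
        (hasDerivAt_const x a).sub h1
      simp only [zero_sub, mul_neg, neg_neg] at h2
      simpa [div_eq_mul_inv] using h2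
    have hF : HasDerivAt (fun x : ℝ => x * Real.exp (a - a/x))
        (1 * Real.exp (a - a/x) + x * (Real.exp (a - a/x) * (a * (x^2)⁻¹))) x :=
      (hasDerivAt_id x).mul (hu.exp)
    have heq : 1 * Real.exp (a - a/x) + x * (Real.exp (a - a/x) * (a * (x^2)⁻¹))
        = (1 + a/x) * Real.exp (a*(1-1/x)) := by
      have h3 : a * (1 - 1/x) = a - a/x := by field_simp
      rw [h3]; field_simp
    rw [heq] at hF
    exact hF.hasDerivWithinAt
  have := intervalIntegral.integral_eq_sub_of_hasDeriv_right_of_le zero_le_one hcont hderiv hint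
  rw [this]; norm_num



noncomputable def W (r u : ℝ) : ℝ := ∫ x in Ioo (0:ℝ) 1, (r*u/x) * Real.exp (r*u*(1-1/x))

lemma exp_part_bound {a x : ℝ} (ha : 0 ≤ a) (hx : x ∈ Ioo (0:ℝ) 1) :
    Real.exp (a*(1-1/x)) ≤ 1 := by
  apply Real.exp_le_one_iff.2
  have h1 : 1 ≤ 1/x := by rw [le_div_iff₀ hx.1]; linarith [hx.2]
  nlinarith

lemma frac_part_bound {a x : ℝ} (ha : 0 ≤ a) (hx : x ∈ Ioo (0:ℝ) 1) :
    (a/x) * Real.exp (a*(1-1/x)) ≤ Real.exp a := by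
  have hx0 : 0 < x := hx.1
  have h3 : a * (1 - 1/x) = a + -(a/x) := by field_simp; ring
  rw [h3, Real.exp_add, ← mul_assoc, mul_comm (a/x) (Real.exp a), mul_assoc]
  calc Real.exp a * (a/x * Real.exp (-(a/x))) ≤ Real.exp a * 1 :=
        mul_le_mul_of_nonneg_left (mul_exp_neg_le_one (div_nonneg ha hx0.le)) (Real.exp_pos a).le
    _ = Real.exp a := mul_one _

lemma int_exp_part {a : ℝ} (ha : 0 ≤ a) :
    IntegrableOn (fun x => Real.exp (a*(1-1/x))) (Ioo (0:ℝ) 1) := by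
  refine integrableOn_of_bounded' measurableSet_Ioo (by simp) (by fun_prop) (C := 1) ?_
  intro x hx
  rw [abs_of_nonneg (Real.exp_pos _).le]
  exact exp_part_bound ha hx

lemma int_frac_part {a : ℝ} (ha : 0 ≤ a) :
    IntegrableOn (fun x => (a/x) * Real.exp (a*(1-1/x))) (Ioo (0:ℝ) 1) := by
  refine integrableOn_of_bounded' measurableSet_Ioo (by simp) (by fun_prop) (C := Real.exp a) ?_
  intro x hx
  rw [abs_of_nonneg (mul_nonneg (div_nonneg ha hx.1.le) (Real.exp_pos _).le)]
  exact frac_part_bound ha hx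

/-- substitution s = a/x -/
lemma sub_Ioi {r a : ℝ} (ha : 0 < a) :
    ∫ s in Ioi a, (a/s) * (r * Real.exp (-(r*s)))
      = ∫ x in Ioo (0:ℝ) 1, (r*a/x) * Real.exp (-(r*a/x)) := by
  have himg : (fun x => a/x) '' (Ioo (0:ℝ) 1) = Ioi a := by
    ext y
    simp only [mem_image, mem_Ioo, mem_Ioi]
    constructor
    · rintro ⟨x, ⟨hx0, hx1⟩, rfl⟩
      rw [lt_div_iff₀ hx0]
      nlinarith
    · intro hy
      have hy0 : 0 < y := lt_trans ha hy
      exact ⟨a/y, ⟨div_pos ha hy0, (div_lt_one hy0).2 hy⟩, by field_simp⟩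
  have hderiv : ∀ x ∈ Ioo (0:ℝ) 1,
      HasDerivWithinAt (fun x => a/x) (a * -(x^2)⁻¹) (Ioo (0:ℝ) 1) x := by
    intro x hx
    have : HasDerivAt (fun x => a/x) (a * -(x^2)⁻¹) x := by
      simpa [div_eq_mul_inv] using (hasDerivAt_inv (ne_of_gt hx.1)).const_mul a
    exact this.hasDerivWithinAt
  have hinj : InjOn (fun x => a/x) (Ioo (0:ℝ) 1) := by
    intro x hx y hy hxy
    simp only at hxy
    have hx0 := ne_of_gt hx.1
    have hy0 := ne_of_gt hy.1
    field_simp at hxy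
    linarith
  have := integral_image_eq_integral_abs_deriv_smul measurableSet_Ioo hderiv hinj
    (fun s => (a/s) * (r * Real.exp (-(r*s))))
  rw [himg] at this
  rw [this]
  apply setIntegral_congr_fun measurableSet_Ioo
  intro x hx
  have hx0 : x ≠ 0 := ne_of_gt hx.1
  have hxx : a/(a/x) = x := by field_simp
  have habs : |a * -(x^2)⁻¹| = a * (x^2)⁻¹ := by
    rw [abs_of_nonpos (by simp; positivity)]; ring
  simp only [smul_eq_mul, habs, hxx]
  rw [show r*(a/x) = r*a/x from by ring]
  field_simp

lemma W_add {r u : ℝ} (hru : 0 ≤ r * u) :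
    W r u + ∫ x in Ioo (0:ℝ) 1, Real.exp (r*u*(1-1/x)) = 1 := by
  have h1 : ∫ x in Ioo (0:ℝ) 1, ((1 + r*u/x) * Real.exp (r*u*(1-1/x))) = 1 := by
    rw [← integral_Ioc_eq_integral_Ioo, ← intervalIntegral.integral_of_le zero_le_one]
    exact ibp_key (r*u) hru
  have h2 : ∫ x in Ioo (0:ℝ) 1, ((1 + r*u/x) * Real.exp (r*u*(1-1/x)))
      = (∫ x in Ioo (0:ℝ) 1, Real.exp (r*u*(1-1/x)))
        + ∫ x in Ioo (0:ℝ) 1, (r*u/x) * Real.exp (r*u*(1-1/x)) := by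
    rw [← integral_add (int_exp_part hru) (int_frac_part hru)]
    apply setIntegral_congr_fun measurableSet_Ioo
    intro x _
    ring
  rw [h2] at h1
  rw [W]
  linarith

lemma W_eq_tail {r u : ℝ} (hu : 0 ≤ u) :
    ∫ s in Ioi u, (u/s) * (r * Real.exp (-(r*s))) = Real.exp (-(r*u)) * W r u := by
  rcases eq_or_lt_of_le hu with h | h
  · subst h
    simp [W]
  · rw [sub_Ioi h, W, ← MeasureTheory.integral_const_mul]
    apply setIntegral_congr_fun measurableSet_Ioo
    intro x hx
    have hx0 : x ≠ 0 := ne_of_gt hx.1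
    have : Real.exp (-(r*u)) * ((r*u/x) * Real.exp (r*u*(1-1/x)))
        = (r*u/x) * Real.exp (-(r*u) + r*u*(1-1/x)) := by
      rw [Real.exp_add]; ring
    simp only
    rw [this]
    have harg : -(r*u) + r*u*(1-1/x) = -(r*u/x) := by field_simp; ring
    rw [harg]


lemma gammaPDF_conv (m : ℕ) (hm : 1 ≤ m) {r : ℝ} (hr : 0 < r) (w : ℝ) :
    ∫⁻ t, gammaPDF m r t * exponentialPDF r (w - t) = gammaPDF (↑m + 1) r w := by
  rcases lt_or_ge w 0 with hw | hw
  · rw [gammaPDF_of_neg hw, ← lintegral_zero]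
    apply lintegral_congr
    intro t
    rcases lt_or_ge t 0 with ht | ht
    · rw [gammaPDF_of_neg ht, zero_mul]
    · rw [exponentialPDF_of_neg (by linarith), mul_zero]
  · have hm0 : (0:ℝ) < m := by exact_mod_cast hm
    have hG := Real.Gamma_pos_of_pos hm0
    set C : ℝ := r ^ (m:ℝ) / Real.Gamma m * r * Real.exp (-(r*w)) with hC
    have hind : ∀ t : ℝ, gammaPDF m r t * exponentialPDF r (w - t)
        = (Icc 0 w).indicator (fun t => ENNReal.ofReal (C * t ^ (m - 1 : ℕ))) t := by
      intro t
      rcases lt_or_ge t 0 with ht | ht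
      · rw [gammaPDF_of_neg ht, zero_mul,
          indicator_of_notMem (by simp only [mem_Icc, not_and_or]; left; linarith)]
      · rcases lt_or_ge w t with htw | htw
        · rw [exponentialPDF_of_neg (by linarith), mul_zero,
            indicator_of_notMem (by simp only [mem_Icc, not_and_or]; right; linarith)]
        · rw [indicator_of_mem (mem_Icc.2 ⟨ht, htw⟩), gammaPDF_of_nonneg ht,
            exponentialPDF_of_nonneg (by linarith), ← ENNReal.ofReal_mul (by positivity)]
          congr 1
          have hrp : t ^ ((m:ℝ) - 1) = t ^ (m - 1 : ℕ) := by
            rw [← Real.rpow_natCast t (m-1)]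
            congr 1
            push_cast [hm]
            ring
          rw [hrp, hC]
          have hexp : Real.exp (-(r*t)) * Real.exp (-(r*(w-t))) = Real.exp (-(r*w)) := by
            rw [← Real.exp_add]; congr 1; ring
          linear_combination (r ^ (m:ℝ) / Real.Gamma m * t ^ (m-1:ℕ) * r) * hexp
    calc ∫⁻ t, gammaPDF m r t * exponentialPDF r (w - t)
        = ∫⁻ t, (Icc 0 w).indicator (fun t => ENNReal.ofReal (C * t ^ (m - 1 : ℕ))) t :=
          lintegral_congr hind
      _ = ∫⁻ t in Icc 0 w, ENNReal.ofReal (C * t ^ (m - 1 : ℕ)) :=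
          lintegral_indicator measurableSet_Icc _
      _ = ENNReal.ofReal (∫ t in Icc 0 w, C * t ^ (m - 1 : ℕ)) := by
          rw [← ofReal_integral_eq_lintegral_ofReal]
          · exact ((continuous_const.mul (continuous_pow _)).integrableOn_Icc)
          · rw [EventuallyLE, ae_restrict_iff' measurableSet_Icc]
            exact ae_of_all _ fun t ht => by
              have := ht.1
              positivity
      _ = ENNReal.ofReal (C * (w ^ m / m)) := by
          congr 1
          rw [MeasureTheory.integral_Icc_eq_integral_Ioc,
            ← intervalIntegral.integral_of_le hw, intervalIntegral.integral_const_mul,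
            integral_pow]
          rw [Nat.sub_add_cancel hm, zero_pow (by omega : m ≠ 0), sub_zero, Nat.cast_sub hm]
          push_cast
          ring
      _ = gammaPDF (↑m + 1) r w := by
          rw [gammaPDF_of_nonneg hw]
          congr 1
          have h1 : Real.Gamma ((m:ℝ) + 1) = m * Real.Gamma m := Real.Gamma_add_one (ne_of_gt hm0)
          have h2 : r ^ ((m:ℝ) + 1) = r ^ (m:ℝ) * r := by
            rw [Real.rpow_add hr, Real.rpow_one]
          have h3 : w ^ ((m:ℝ) + 1 - 1) = w ^ (m : ℕ) := by
            rw [add_sub_cancel_right, Real.rpow_natCast]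
          rw [h1, h2, h3, hC]
          field_simp

lemma map_add_gamma_exp (m : ℕ) (hm : 1 ≤ m) {r : ℝ} (hr : 0 < r) :
    Measure.map (fun p : ℝ × ℝ => p.1 + p.2) ((gammaMeasure m r).prod (expMeasure r)) =
      gammaMeasure (↑m + 1) r := by
  have hm0 : (0:ℝ) < m := by exact_mod_cast hm
  haveI : IsProbabilityMeasure (gammaMeasure (m:ℝ) r) := isProbabilityMeasure_gammaMeasure hm0 hr
  haveI : IsProbabilityMeasure (expMeasure r) := isProbabilityMeasure_expMeasure hr
  have hpdfE : Measurable (exponentialPDF r) := (measurable_exponentialPDFReal r).ennreal_ofReal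
  have hpdfG : Measurable (gammaPDF m r) := (measurable_gammaPDFReal m r).ennreal_ofReal
  ext E hE
  rw [Measure.map_apply measurable_add hE, Measure.prod_apply (measurable_add hE)]
  set F : ℝ → ℝ → ℝ≥0∞ := fun t w => E.indicator (fun w => exponentialPDF r (w - t)) w with hF
  have hGmeas : Measurable (Function.uncurry F) := by
    have : Function.uncurry F = fun p : ℝ × ℝ =>
        {q : ℝ × ℝ | q.2 ∈ E}.indicator (fun q => exponentialPDF r (q.2 - q.1)) p := by
      funext p
      by_cases h : p.2 ∈ E <;> simp [Function.uncurry, hF, Set.indicator_apply, h]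
    rw [this]
    exact Measurable.indicator (hpdfE.comp (measurable_snd.sub measurable_fst))
      (measurable_snd hE)
  have step1 : ∀ t : ℝ, expMeasure r (Prod.mk t ⁻¹' ((fun p : ℝ × ℝ => p.1 + p.2) ⁻¹' E))
      = ∫⁻ w, F t w := by
    intro t
    have hA : MeasurableSet ((fun s => t + s) ⁻¹' E) := hE.preimage (measurable_const_add t)
    have h1 : Prod.mk t ⁻¹' ((fun p : ℝ × ℝ => p.1 + p.2) ⁻¹' E) = (fun s => t + s) ⁻¹' E := rfl
    rw [h1, expMeasure, gammaMeasure, withDensity_apply _ hA]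
    have h2 : ∀ s : ℝ, ((fun s => t + s) ⁻¹' E).indicator (gammaPDF 1 r) s = F t (t + s) := by
      intro s
      by_cases hs : t + s ∈ E
      · rw [Set.indicator_of_mem (show s ∈ (fun s => t + s) ⁻¹' E from hs), hF]
        simp only
        rw [Set.indicator_of_mem hs, add_sub_cancel_left]
        rfl
      · rw [Set.indicator_of_notMem (show s ∉ (fun s => t + s) ⁻¹' E from hs), hF]
        simp only
        rw [Set.indicator_of_notMem hs]
    rw [← lintegral_indicator hA]
    calc ∫⁻ s, ((fun s => t + s) ⁻¹' E).indicator (gammaPDF 1 r) s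
        = ∫⁻ s, F t (t + s) := lintegral_congr h2
      _ = ∫⁻ w, F t w := (measurePreserving_add_left volume t).lintegral_comp
          (hGmeas.comp (measurable_const.prodMk measurable_id))
  calc ∫⁻ t, expMeasure r (Prod.mk t ⁻¹' ((fun p : ℝ × ℝ => p.1 + p.2) ⁻¹' E))
        ∂(gammaMeasure m r)
      = ∫⁻ t, (∫⁻ w, F t w) ∂(gammaMeasure m r) := lintegral_congr step1
    _ = ∫⁻ t, gammaPDF m r t * ∫⁻ w, F t w := by
        have hg : Measurable fun t => ∫⁻ w, F t w := by
          exact hGmeas.lintegral_prod_right'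
        rw [gammaMeasure]
        exact lintegral_withDensity_eq_lintegral_mul _ hpdfG hg
    _ = ∫⁻ t, ∫⁻ w, gammaPDF m r t * F t w := by
        apply lintegral_congr
        intro t
        exact (lintegral_const_mul _
          (show Measurable (F t) from hGmeas.comp (measurable_const.prodMk measurable_id))).symm
    _ = ∫⁻ w, ∫⁻ t, gammaPDF m r t * F t w := by
        apply lintegral_lintegral_swap
        exact ((hpdfG.comp measurable_fst).mul hGmeas).aemeasurable
    _ = ∫⁻ w, E.indicator (gammaPDF (↑m + 1) r) w := by
        apply lintegral_congr
        intro w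
        rcases Classical.em (w ∈ E) with hw | hw
        · rw [Set.indicator_of_mem hw, ← gammaPDF_conv m hm hr w]
          apply lintegral_congr
          intro t
          rw [hF]
          simp only [Set.indicator_of_mem hw]
        · rw [Set.indicator_of_notMem hw]
          rw [← lintegral_zero]
          apply lintegral_congr
          intro t
          rw [hF]
          simp only [Set.indicator_of_notMem hw, mul_zero]
    _ = ∫⁻ w in E, gammaPDF (↑m + 1) r w := lintegral_indicator hE _
    _ = gammaMeasure (↑m + 1) r E := (withDensity_apply _ hE).symm


lemma expMeasure_Ioi {r a : ℝ} (hr : 0 < r) (ha : 0 ≤ a) :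
    expMeasure r (Ioi a) = ENNReal.ofReal (Real.exp (-(r*a))) := by
  haveI : IsProbabilityMeasure (expMeasure r) := isProbabilityMeasure_expMeasure hr
  have hIic : expMeasure r (Iic a) = ENNReal.ofReal (1 - Real.exp (-(r*a))) := by
    rw [expMeasure, gammaMeasure, withDensity_apply _ measurableSet_Iic]
    have := lintegral_exponentialPDF_eq_antiDeriv hr a
    rw [if_pos ha] at this
    rw [← this]
    rfl
  have hcompl : Ioi a = (Iic a)ᶜ := by simp
  rw [hcompl, measure_compl measurableSet_Iic (measure_ne_top _ _), hIic, measure_univ]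
  rw [← ENNReal.ofReal_one, ← ENNReal.ofReal_sub _ (by
    have := Real.exp_le_one_iff.2 (by nlinarith : -(r*a) ≤ 0)
    linarith)]
  norm_num

lemma measurableSet_B (Lp : ℝ) :
    MeasurableSet {p : ℝ × ℝ | p.1 ≤ Lp ∧ Lp < p.1 + p.2} := by
  apply MeasurableSet.inter
  · exact measurableSet_le measurable_fst measurable_const
  · exact measurableSet_lt measurable_const (measurable_fst.add measurable_snd)

lemma measureB (k : ℕ) (hk : 1 ≤ k) {r Lp : ℝ} (hr : 0 < r) (hLp : 0 < Lp) :
    ((gammaMeasure k r).prod (expMeasure r)) {p : ℝ × ℝ | p.1 ≤ Lp ∧ Lp < p.1 + p.2}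
      = ENNReal.ofReal (r^k * Lp^k * Real.exp (-(r*Lp)) / k.factorial) := by
  have hk0 : (0:ℝ) < k := by exact_mod_cast hk
  have hG := Real.Gamma_pos_of_pos hk0
  haveI : IsProbabilityMeasure (expMeasure r) := isProbabilityMeasure_expMeasure hr
  rw [Measure.prod_apply (measurableSet_B Lp)]
  have hsec : ∀ t : ℝ, expMeasure r (Prod.mk t ⁻¹' {p : ℝ × ℝ | p.1 ≤ Lp ∧ Lp < p.1 + p.2})
      = (Iic Lp).indicator (fun t => ENNReal.ofReal (Real.exp (-(r*(Lp - t))))) t := by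
    intro t
    rcases le_or_gt t Lp with ht | ht
    · have hset : Prod.mk t ⁻¹' {p : ℝ × ℝ | p.1 ≤ Lp ∧ Lp < p.1 + p.2} = Ioi (Lp - t) := by
        ext s
        simp only [mem_preimage, mem_setOf_eq, mem_Ioi]
        constructor
        · rintro ⟨_, h2⟩; linarith
        · intro h; exact ⟨ht, by linarith⟩
      rw [hset, expMeasure_Ioi hr (by linarith), indicator_of_mem (mem_Iic.2 ht)]
    · have hset : Prod.mk t ⁻¹' {p : ℝ × ℝ | p.1 ≤ Lp ∧ Lp < p.1 + p.2} = ∅ := by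
        ext s
        simp only [mem_preimage, mem_setOf_eq, mem_empty_iff_false, iff_false, not_and]
        intro h; linarith
      rw [hset, indicator_of_notMem (by simp [mem_Iic]; linarith), measure_empty]
  calc ∫⁻ t, expMeasure r (Prod.mk t ⁻¹' {p : ℝ × ℝ | p.1 ≤ Lp ∧ Lp < p.1 + p.2})
        ∂(gammaMeasure k r)
      = ∫⁻ t, (Iic Lp).indicator (fun t => ENNReal.ofReal (Real.exp (-(r*(Lp - t))))) t
        ∂(gammaMeasure k r) := lintegral_congr hsec
    _ = ∫⁻ t, gammaPDF k r t *
          (Iic Lp).indicator (fun t => ENNReal.ofReal (Real.exp (-(r*(Lp - t))))) t := by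
        rw [gammaMeasure]
        exact lintegral_withDensity_eq_lintegral_mul _
          ((measurable_gammaPDFReal k r).ennreal_ofReal)
          (((Real.measurable_exp.comp (by fun_prop)).ennreal_ofReal).indicator measurableSet_Iic)
    _ = ∫⁻ t, (Icc 0 Lp).indicator
          (fun t => ENNReal.ofReal ((r ^ (k:ℝ) / Real.Gamma k * Real.exp (-(r*Lp))) * t ^ (k-1:ℕ))) t := by
        apply lintegral_congr
        intro t
        rcases lt_or_ge t 0 with ht | ht
        · rw [gammaPDF_of_neg ht, zero_mul,
            indicator_of_notMem (by simp only [mem_Icc, not_and_or]; left; linarith)]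
        · rcases le_or_gt t Lp with htw | htw
          · rw [indicator_of_mem (mem_Iic.2 htw), indicator_of_mem (mem_Icc.2 ⟨ht, htw⟩),
              gammaPDF_of_nonneg ht, ← ENNReal.ofReal_mul (by positivity)]
            congr 1
            have hrp : t ^ ((k:ℝ) - 1) = t ^ (k - 1 : ℕ) := by
              rw [← Real.rpow_natCast t (k-1)]
              congr 1
              push_cast [hk]
              ring
            rw [hrp]
            have hexp : Real.exp (-(r*t)) * Real.exp (-(r*(Lp-t))) = Real.exp (-(r*Lp)) := by
              rw [← Real.exp_add]; congr 1; ring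
            linear_combination (r ^ (k:ℝ) / Real.Gamma k * t ^ (k-1:ℕ)) * hexp
          · rw [indicator_of_notMem (by simp only [mem_Iic, not_le]; exact htw), mul_zero,
              indicator_of_notMem (by simp only [mem_Icc, not_and_or]; right; linarith)]
    _ = ∫⁻ t in Icc 0 Lp,
          ENNReal.ofReal ((r ^ (k:ℝ) / Real.Gamma k * Real.exp (-(r*Lp))) * t ^ (k-1:ℕ)) :=
        lintegral_indicator measurableSet_Icc _
    _ = ENNReal.ofReal (∫ t in Icc 0 Lp, (r ^ (k:ℝ) / Real.Gamma k * Real.exp (-(r*Lp))) * t ^ (k-1:ℕ)) := by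
        rw [← ofReal_integral_eq_lintegral_ofReal]
        · exact (continuous_const.mul (continuous_pow _)).integrableOn_Icc
        · rw [EventuallyLE, ae_restrict_iff' measurableSet_Icc]
          exact ae_of_all _ fun t ht => by
            have := ht.1
            positivity
    _ = ENNReal.ofReal (r^k * Lp^k * Real.exp (-(r*Lp)) / k.factorial) := by
        congr 1
        rw [MeasureTheory.integral_Icc_eq_integral_Ioc, ← intervalIntegral.integral_of_le hLp.le,
          intervalIntegral.integral_const_mul, integral_pow, Nat.sub_add_cancel hk,
          zero_pow (by omega : k ≠ 0), sub_zero, Nat.cast_sub hk]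
        have hGfac : Real.Gamma k = (k-1).factorial := by
          rw [show (k:ℝ) = ((k - 1 : ℕ) : ℝ) + 1 by rw [Nat.cast_sub hk]; push_cast; ring]
          exact_mod_cast Real.Gamma_nat_eq_factorial (k-1)
        have hkfac : (k.factorial : ℝ) = k * (k-1).factorial := by
          exact_mod_cast (Nat.mul_factorial_pred (by omega : k ≠ 0)).symm
        rw [hGfac, Real.rpow_natCast]
        push_cast
        rw [hkfac]
        have hfac : ((k-1).factorial : ℝ) > 0 := by exact_mod_cast (k-1).factorial_pos
        field_simp
        ring
        exact mul_inv_cancel₀ (ne_of_gt hk0)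




lemma exponentialPDFReal_eq' {r : ℝ} (s : ℝ) (hs : 0 ≤ s) :
    exponentialPDFReal r s = r * Real.exp (-(r*s)) := by
  rw [exponentialPDFReal, gammaPDFReal, if_pos hs]
  simp [Real.rpow_one, Real.Gamma_one]

lemma integralB (k : ℕ) (hk : 1 ≤ k) {r Lp : ℝ} (hr : 0 < r) (hLp : 0 < Lp) :
    ∫ p in {p : ℝ × ℝ | p.1 ≤ Lp ∧ Lp < p.1 + p.2}, ((Lp - p.1)/p.2)
        ∂((gammaMeasure k r).prod (expMeasure r))
      = (r^k * Real.exp (-(r*Lp)) / (k-1).factorial)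
          * ∫ u in (0:ℝ)..Lp, (Lp-u)^(k-1) * W r u := by
  have hk0 : (0:ℝ) < k := by exact_mod_cast hk
  have hG := Real.Gamma_pos_of_pos hk0
  haveI : IsProbabilityMeasure (gammaMeasure (k:ℝ) r) := isProbabilityMeasure_gammaMeasure hk0 hr
  haveI : IsProbabilityMeasure (expMeasure r) := isProbabilityMeasure_expMeasure hr
  set B : Set (ℝ × ℝ) := {p : ℝ × ℝ | p.1 ≤ Lp ∧ Lp < p.1 + p.2} with hBdef
  have hB : MeasurableSet B := measurableSet_B Lp
  set g : ℝ × ℝ → ℝ := fun p => (Lp - p.1)/p.2 with hgdef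
  have hgmeas : Measurable g := (measurable_const.sub measurable_fst).div measurable_snd
  set f : ℝ × ℝ → ℝ := B.indicator g with hfdef
  have hfmeas : Measurable f := hgmeas.indicator hB
  have hfb : ∀ p, |f p| ≤ 1 := by
    intro p
    rw [hfdef]
    rcases Classical.em (p ∈ B) with hp | hp
    · rw [indicator_of_mem hp]
      obtain ⟨h1, h2⟩ := hp
      have hs : 0 < p.2 := by linarith
      rw [abs_of_nonneg (div_nonneg (by linarith) hs.le), div_le_one hs]
      linarith
    · rw [indicator_of_notMem hp]; norm_num
  have hint : Integrable f (((gammaMeasure k r).prod (expMeasure r))) :=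
    Integrable.mono' (integrable_const 1) hfmeas.aestronglyMeasurable (ae_of_all _ hfb)
  -- inner integral evaluation
  have hinner : ∀ t ∈ Icc (0:ℝ) Lp,
      ∫ s, f (t, s) ∂(expMeasure r) = Real.exp (-(r*(Lp-t))) * W r (Lp-t) := by
    intro t ht
    have hεd : expMeasure r
        = volume.withDensity (fun s => ((exponentialPDFReal r s).toNNReal : ℝ≥0∞)) := rfl
    rw [hεd, integral_withDensity_eq_integral_smul
      (measurable_exponentialPDFReal r).real_toNNReal _]
    have hpt : ∀ s : ℝ, (exponentialPDFReal r s).toNNReal • f (t, s)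
        = (Ioi (Lp - t)).indicator (fun s => ((Lp-t)/s) * (r * Real.exp (-(r*s)))) s := by
      intro s
      rcases lt_or_ge (Lp - t) s with hs | hs
      · have hs0 : 0 < s := lt_of_le_of_lt (by linarith [ht.2] : (0:ℝ) ≤ Lp - t) hs
        have hmem : (t, s) ∈ B := ⟨ht.2, by simp; linarith⟩
        rw [indicator_of_mem (mem_Ioi.2 hs), hfdef, indicator_of_mem hmem, hgdef,
          NNReal.smul_def, Real.coe_toNNReal _ (exponentialPDFReal_nonneg hr s),
          exponentialPDFReal_eq' s hs0.le, smul_eq_mul]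
        ring
      · have hmem : (t, s) ∉ B := by
          rw [hBdef]
          simp only [mem_setOf_eq, not_and_or, not_lt]
          right; linarith
        rw [indicator_of_notMem (by simp [mem_Ioi]; linarith), hfdef,
          indicator_of_notMem hmem, smul_zero]
    rw [integral_congr_ae (ae_of_all _ hpt), integral_indicator measurableSet_Ioi,
      W_eq_tail (by linarith [ht.2] : (0:ℝ) ≤ Lp - t)]
  have hinner0 : ∀ t : ℝ, Lp < t → ∫ s, f (t, s) ∂(expMeasure r) = 0 := by
    intro t ht
    have : ∀ s : ℝ, f (t, s) = 0 := by
      intro s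
      rw [hfdef, indicator_of_notMem]
      rw [hBdef]
      simp only [mem_setOf_eq, not_and_or, not_le]
      left; exact ht
    simp only [this, integral_zero]
  calc ∫ p in B, g p ∂((gammaMeasure k r).prod (expMeasure r))
      = ∫ p, f p ∂((gammaMeasure k r).prod (expMeasure r)) := (integral_indicator hB).symm
    _ = ∫ t, ∫ s, f (t, s) ∂(expMeasure r) ∂(gammaMeasure k r) := integral_prod f hint
    _ = ∫ t, (gammaPDFReal k r t).toNNReal • ∫ s, f (t, s) ∂(expMeasure r) := by
        have hγd : gammaMeasure (k:ℝ) r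
            = volume.withDensity (fun t => ((gammaPDFReal k r t).toNNReal : ℝ≥0∞)) := rfl
        rw [hγd, integral_withDensity_eq_integral_smul
          (measurable_gammaPDFReal k r).real_toNNReal _]
    _ = ∫ t, (Icc 0 Lp).indicator
          (fun t => (r ^ (k:ℝ) / Real.Gamma k * Real.exp (-(r*Lp)))
            * (t^(k-1:ℕ) * W r (Lp - t))) t := by
        apply integral_congr_ae (ae_of_all _ _)
        intro t
        rcases lt_or_ge t 0 with ht | ht
        · have h0 : gammaPDFReal k r t = 0 := by
            rw [gammaPDFReal, if_neg (by linarith)]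
          rw [h0, indicator_of_notMem (by simp only [mem_Icc, not_and_or]; left; linarith)]
          simp
        · rcases le_or_gt t Lp with htw | htw
          · rw [hinner t ⟨ht, htw⟩, indicator_of_mem (mem_Icc.2 ⟨ht, htw⟩),
              NNReal.smul_def, Real.coe_toNNReal _ (gammaPDFReal_nonneg hk0 hr t),
              gammaPDFReal, if_pos ht]
            have hrp : t ^ ((k:ℝ) - 1) = t ^ (k - 1 : ℕ) := by
              rw [← Real.rpow_natCast t (k-1)]
              congr 1
              push_cast [hk]
              ring
            have hexp : Real.exp (-(r*t)) * Real.exp (-(r*(Lp-t))) = Real.exp (-(r*Lp)) := by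
              rw [← Real.exp_add]; congr 1; ring
            rw [hrp]
            simp only [smul_eq_mul]
            linear_combination (r ^ (k:ℝ) / Real.Gamma k * t ^ (k-1:ℕ) * W r (Lp - t)) * hexp
          · rw [hinner0 t htw, indicator_of_notMem
              (by simp only [mem_Icc, not_and_or]; right; linarith), smul_zero]
    _ = ∫ t in Icc 0 Lp, (r ^ (k:ℝ) / Real.Gamma k * Real.exp (-(r*Lp)))
          * (t^(k-1:ℕ) * W r (Lp - t)) := integral_indicator measurableSet_Icc
    _ = (r ^ (k:ℝ) / Real.Gamma k * Real.exp (-(r*Lp)))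
          * ∫ t in (0:ℝ)..Lp, t^(k-1:ℕ) * W r (Lp - t) := by
        rw [MeasureTheory.integral_Icc_eq_integral_Ioc, ← intervalIntegral.integral_of_le hLp.le,
          intervalIntegral.integral_const_mul]
    _ = (r^k * Real.exp (-(r*Lp)) / (k-1).factorial)
          * ∫ u in (0:ℝ)..Lp, (Lp-u)^(k-1) * W r u := by
        have hsub : ∫ t in (0:ℝ)..Lp, t^(k-1:ℕ) * W r (Lp - t)
            = ∫ u in (0:ℝ)..Lp, (Lp-u)^(k-1) * W r u := by
          have h1 : ∀ t, ((fun u => (Lp-u)^(k-1) * W r u) (Lp - t)) = t^(k-1:ℕ) * W r (Lp - t) := by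
            intro t; simp [sub_sub_cancel]
          rw [show (fun t => t^(k-1:ℕ) * W r (Lp - t))
              = fun t => ((fun u => (Lp-u)^(k-1) * W r u) (Lp - t)) from funext fun t => (h1 t).symm]
          rw [intervalIntegral.integral_comp_sub_left (fun u => (Lp-u)^(k-1) * W r u) Lp]
          norm_num
        rw [hsub]
        congr 1
        have hGfac : Real.Gamma k = (k-1).factorial := by
          rw [show (k:ℝ) = ((k - 1 : ℕ) : ℝ) + 1 by rw [Nat.cast_sub hk]; push_cast; ring]
          exact_mod_cast Real.Gamma_nat_eq_factorial (k-1)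
        rw [hGfac, Real.rpow_natCast]
        ring




lemma exp_fac_le_one {a x : ℝ} (ha : 0 ≤ a) (hx0 : 0 < x) (hx1 : x ≤ 1) :
    Real.exp (a*(1-1/x)) ≤ 1 := by
  apply Real.exp_le_one_iff.2
  have h1 : 1 ≤ 1/x := by rw [le_div_iff₀ hx0]; linarith
  nlinarith

lemma W_nonneg {r u : ℝ} (hru : 0 ≤ r * u) : 0 ≤ W r u := by
  apply setIntegral_nonneg measurableSet_Ioo
  intro x hx
  exact mul_nonneg (div_nonneg hru hx.1.le) (Real.exp_pos _).le

lemma W_le_one {r u : ℝ} (hru : 0 ≤ r * u) : W r u ≤ 1 := by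
  have h := W_add hru
  have h2 : 0 ≤ ∫ x in Ioo (0:ℝ) 1, Real.exp (r*u*(1-1/x)) :=
    setIntegral_nonneg measurableSet_Ioo fun x _ => (Real.exp_pos _).le
  linarith

lemma W_measurable (r : ℝ) : Measurable (W r) := by
  have : Measurable (Function.uncurry (fun u x => (r*u/x) * Real.exp (r*u*(1-1/x)))) := by
    fun_prop
  have sm := this.stronglyMeasurable
  exact (MeasureTheory.StronglyMeasurable.integral_prod_right
    (ν := volume.restrict (Ioo (0:ℝ) 1)) sm).measurable

lemma final_id (k : ℕ) (hk : 1 ≤ k) {r Lp : ℝ} (hr : 0 < r) (hLp : 0 < Lp) :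
    ∫ u in (0:ℝ)..Lp, (Lp-u)^(k-1) * W r u
      = Lp^k/k - ∫ x in (0:ℝ)..1, ∫ u in (0:ℝ)..Lp, (Lp - u)^(k-1) * Real.exp (r*u*(1-1/x)) := by
  set μ1 := volume.restrict (Ioc (0:ℝ) 1) with hμ1
  set μ2 := volume.restrict (Ioc (0:ℝ) Lp) with hμ2
  haveI h1fin : IsFiniteMeasure μ1 := by
    constructor; rw [hμ1, Measure.restrict_apply_univ]; simp
  haveI h2fin : IsFiniteMeasure μ2 := by
    constructor; rw [hμ2, Measure.restrict_apply_univ]; simp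
  set φ : ℝ → ℝ → ℝ := fun x u => (Lp-u)^(k-1) * Real.exp (r*u*(1-1/x)) with hφ
  have hφm : Measurable (Function.uncurry φ) := by
    rw [hφ]; fun_prop
  have hφint : Integrable (Function.uncurry φ) (μ1.prod μ2) := by
    refine Integrable.mono' (integrable_const (Lp^(k-1))) hφm.aestronglyMeasurable ?_
    rw [hμ1, hμ2, Measure.prod_restrict, ae_restrict_iff' (measurableSet_Ioc.prod measurableSet_Ioc)]
    apply ae_of_all
    rintro ⟨x, u⟩ ⟨hx, hu⟩
    simp only [Function.uncurry, hφ]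
    have h1 : (0:ℝ) ≤ Lp - u := by linarith [hu.2]
    have h2 : (Lp - u)^(k-1) ≤ Lp^(k-1) := pow_le_pow_left₀ h1 (by linarith [hu.1]) _
    have h3 : Real.exp (r*u*(1-1/x)) ≤ 1 :=
      exp_fac_le_one (mul_nonneg hr.le hu.1.le) hx.1 hx.2
    rw [norm_eq_abs, abs_of_nonneg (by positivity)]
    nlinarith [pow_nonneg h1 (k-1), (Real.exp_pos (r*u*(1-1/x))).le]
  have hswap : ∫ x in (0:ℝ)..1, ∫ u in (0:ℝ)..Lp, φ x u
      = ∫ u in (0:ℝ)..Lp, ∫ x in (0:ℝ)..1, φ x u := by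
    have h := integral_integral_swap hφint
    calc ∫ x in (0:ℝ)..1, ∫ u in (0:ℝ)..Lp, φ x u
        = ∫ x, ∫ u, φ x u ∂μ2 ∂μ1 := by
          rw [intervalIntegral.integral_of_le zero_le_one]
          apply setIntegral_congr_fun measurableSet_Ioc (fun x _ => ?_)
          rw [intervalIntegral.integral_of_le hLp.le]
      _ = ∫ u, ∫ x, φ x u ∂μ1 ∂μ2 := h
      _ = ∫ u in (0:ℝ)..Lp, ∫ x in (0:ℝ)..1, φ x u := by
          rw [intervalIntegral.integral_of_le hLp.le]
          apply setIntegral_congr_fun measurableSet_Ioc (fun u _ => ?_)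
          rw [intervalIntegral.integral_of_le zero_le_one]
  have hC : ∀ u : ℝ, 0 ≤ u → ∫ x in (0:ℝ)..1, φ x u = (Lp-u)^(k-1) * (1 - W r u) := by
    intro u hu
    have hru : 0 ≤ r * u := by positivity
    have : ∫ x in (0:ℝ)..1, φ x u
        = (Lp-u)^(k-1) * ∫ x in (0:ℝ)..1, Real.exp (r*u*(1-1/x)) := by
      rw [hφ, intervalIntegral.integral_const_mul]
    rw [this]
    congr 1
    rw [intervalIntegral.integral_of_le zero_le_one, integral_Ioc_eq_integral_Ioo]
    have := W_add hru
    linarith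
  have hpowint : ∫ u in (0:ℝ)..Lp, (Lp-u)^(k-1) = Lp^k/k := by
    have h1 : ∀ t : ℝ, ((fun u : ℝ => u^(k-1)) (Lp - t)) = (Lp - t)^(k-1) := fun t => rfl
    rw [show (fun u : ℝ => (Lp-u)^(k-1)) = fun t => ((fun u : ℝ => u^(k-1)) (Lp - t)) from rfl,
      intervalIntegral.integral_comp_sub_left (fun u : ℝ => u^(k-1)) Lp]
    norm_num
    rw [Nat.sub_add_cancel hk, Nat.cast_sub hk]
    push_cast
    ring
  have hWint : IntervalIntegrable (fun u => (Lp-u)^(k-1) * W r u) volume 0 Lp := by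
    rw [intervalIntegrable_iff, uIoc_of_le hLp.le]
    apply integrableOn_of_bounded' measurableSet_Ioc (by simp) (C := Lp^(k-1))
    · exact ((measurable_const.sub measurable_id).pow_const _).mul (W_measurable r)
    · intro u hu
      have h1 : (0:ℝ) ≤ Lp - u := by linarith [hu.2]
      have hru : 0 ≤ r * u := by nlinarith [hu.1, hr]
      have h2 : (Lp - u)^(k-1) ≤ Lp^(k-1) := pow_le_pow_left₀ h1 (by linarith [hu.1]) _
      rw [abs_of_nonneg (mul_nonneg (pow_nonneg h1 _) (W_nonneg hru))]
      nlinarith [W_nonneg hru, W_le_one hru, pow_nonneg h1 (k-1)]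
  have hD : ∫ x in (0:ℝ)..1, ∫ u in (0:ℝ)..Lp, φ x u
      = Lp^k/k - ∫ u in (0:ℝ)..Lp, (Lp-u)^(k-1) * W r u := by
    rw [hswap]
    have hcongr : ∫ u in (0:ℝ)..Lp, ∫ x in (0:ℝ)..1, φ x u
        = ∫ u in (0:ℝ)..Lp, ((Lp-u)^(k-1) - (Lp-u)^(k-1) * W r u) := by
      apply intervalIntegral.integral_congr
      intro u hu
      rw [uIcc_of_le hLp.le] at hu
      simp only
      rw [hC u hu.1]
      ring
    rw [hcongr, intervalIntegral.integral_sub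
      (Continuous.intervalIntegrable (by continuity) _ _) hWint, hpowint]
  rw [show (fun x => ∫ u in (0:ℝ)..Lp, (Lp - u)^(k-1) * Real.exp (r*u*(1-1/x)))
      = fun x => ∫ u in (0:ℝ)..Lp, φ x u from rfl] at *
  rw [hD]
  ring




/-- Conditional mean of the vestige time `V_k = (L_p - S_k)/s_{k+1}` given
`A_k = {S_k ≤ L_p < S_{k+1}}`:
`E[V_k | A_k] = 1 - (k/L_p) ∫_0^1 ∫_0^{L_p} ((L_p-u)/L_p)^{k-1} e^{(u/ν)(1-1/x)} du dx`.
Here `s` is `0`-indexed, so `s_{k+1}` is `s k` and `S_k = Σ_{i<k} s_i`. -/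
theorem vestige_Vk_conditional_mean
    {Ω : Type*} [MeasurableSpace Ω] (μ : Measure Ω) [IsProbabilityMeasure μ]
    (ν Lp θ : ℝ) (hν : 0 < ν) (hLp : 0 < Lp) (hθ : θ = Lp / ν)
    (k : ℕ) (hk : 1 ≤ k)
    (s : ℕ → Ω → ℝ) (hmeas : ∀ n, Measurable (s n))
    (hindep : iIndepFun s μ)
    (hdist : ∀ n, Measure.map (s n) μ = expMeasure (1 / ν))
    (S : ℕ → Ω → ℝ) (hS : ∀ m ω, S m ω = ∑ i ∈ Finset.range m, s i ω)
    (V : ℕ → Ω → ℝ) (hV : ∀ m ω, V m ω = (Lp - S m ω) / s m ω) :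
    ∫ ω, V k ω ∂(μ[|{ω | S k ω ≤ Lp ∧ Lp < S (k + 1) ω}]) =
      1 - (k / Lp) *
        ∫ x in (0 : ℝ)..1, ∫ u in (0 : ℝ)..Lp, ((Lp - u) / Lp) ^ (k - 1) *
          Real.exp ((u / ν) * (1 - 1 / x)) := by
  set r : ℝ := 1/ν with hrdef
  have hr : 0 < r := by positivity
  have hSmeas : ∀ m, Measurable (S m) := by
    intro m
    have hfe : S m = fun ω => ∑ i ∈ Finset.range m, s i ω := funext (fun ω => hS m ω)
    rw [hfe]
    exact Finset.measurable_sum _ (fun i _ => hmeas i)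
  have hindepSn : ∀ n : ℕ, IndepFun (S n) (s n) μ := by
    intro n
    have h := hindep.indepFun_sum_range_succ hmeas n
    have hsum : (∑ i ∈ Finset.range n, s i) = S n := by
      funext ω
      rw [hS]
      simp [Finset.sum_apply]
    rwa [hsum] at h
  have hjointn : ∀ n : ℕ, Measure.map (fun ω => (S n ω, s n ω)) μ
      = (Measure.map (S n) μ).prod (Measure.map (s n) μ) := fun n =>
    (indepFun_iff_map_prod_eq_prod_map_map (hSmeas n).aemeasurable (hmeas n).aemeasurable).1
      (hindepSn n)
  have hslaw : ∀ m : ℕ, 1 ≤ m → Measure.map (S m) μ = gammaMeasure m r := by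
    intro m hm
    induction m with
    | zero => omega
    | succ n ih =>
      by_cases hn : n = 0
      · subst hn
        have hS1 : S 1 = s 0 := funext fun ω => by rw [hS]; simp
        rw [hS1, hdist 0, expMeasure]
        norm_num
      · have hn1 : 1 ≤ n := by omega
        have ihn := ih hn1
        have hpair : Measurable fun ω => (S n ω, s n ω) := (hSmeas n).prodMk (hmeas n)
        have hSeq : S (n+1) = (fun p : ℝ×ℝ => p.1 + p.2) ∘ (fun ω => (S n ω, s n ω)) := by
          funext ω
          simp only [Function.comp_apply]
          rw [hS, hS, Finset.sum_range_succ]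
        rw [hSeq, ← Measure.map_map measurable_add hpair, hjointn n, ihn, hdist n,
          map_add_gamma_exp n hn1 hr]
        congr 1
        push_cast
        ring
  -- joint law at k
  set T : Ω → ℝ×ℝ := fun ω => (S k ω, s k ω) with hTdef
  have hTmeas : Measurable T := (hSmeas k).prodMk (hmeas k)
  have hjointk : Measure.map T μ = (gammaMeasure k r).prod (expMeasure r) := by
    rw [hTdef]
    rw [hjointn k, hslaw k hk, hdist k]
  set A : Set Ω := {ω | S k ω ≤ Lp ∧ Lp < S (k + 1) ω} with hAdef
  set B : Set (ℝ×ℝ) := {p : ℝ × ℝ | p.1 ≤ Lp ∧ Lp < p.1 + p.2} with hBdef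
  have hA : A = T ⁻¹' B := by
    ext ω
    simp only [hAdef, hBdef, mem_setOf_eq, mem_preimage, hTdef]
    rw [hS (k+1) ω, Finset.sum_range_succ, ← hS k ω]
  set g : ℝ × ℝ → ℝ := fun p => (Lp - p.1)/p.2 with hgdef
  have hgmeas : Measurable g := (measurable_const.sub measurable_fst).div measurable_snd
  have hVg : V k = g ∘ T := funext fun ω => by rw [hV]; rfl
  set c : ℝ := r^k * Lp^k * Real.exp (-(r*Lp)) / k.factorial with hcdef
  have hc : 0 < c := by
    have : (0:ℝ) < k.factorial := by exact_mod_cast k.factorial_pos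
    positivity
  have hmA : μ A = ENNReal.ofReal c := by
    rw [hA, ← Measure.map_apply hTmeas (measurableSet_B Lp), hjointk, measureB k hk hr hLp]
  have hIA : ∫ ω in A, V k ω ∂μ
      = (r^k * Real.exp (-(r*Lp)) / (k-1).factorial)
          * ∫ u in (0:ℝ)..Lp, (Lp-u)^(k-1) * W r u := by
    rw [hA, hVg, ← integralB k hk hr hLp, ← hjointk]
    exact (setIntegral_map (measurableSet_B Lp) hgmeas.aestronglyMeasurable
      hTmeas.aemeasurable).symm
  -- conditional expectation
  rw [ProbabilityTheory.cond, integral_smul_measure, hmA]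
  rw [show ∫ ω, V k ω ∂(μ.restrict A) = ∫ ω in A, V k ω ∂μ from rfl, hIA]
  rw [ENNReal.toReal_inv, ENNReal.toReal_ofReal hc.le, smul_eq_mul]
  -- identity
  rw [final_id k hk hr hLp]
  set D : ℝ := ∫ x in (0:ℝ)..1, ∫ u in (0:ℝ)..Lp, (Lp - u)^(k-1) * Real.exp (r*u*(1-1/x))
    with hDdef
  have hRHS : ∫ x in (0:ℝ)..1, ∫ u in (0:ℝ)..Lp, ((Lp - u) / Lp) ^ (k - 1) *
      Real.exp ((u / ν) * (1 - 1 / x)) = (1/Lp)^(k-1) * D := by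
    rw [hDdef, ← intervalIntegral.integral_const_mul]
    apply intervalIntegral.integral_congr
    intro x _
    simp only
    rw [← intervalIntegral.integral_const_mul]
    apply intervalIntegral.integral_congr
    intro u _
    simp only
    rw [show (u/ν)*(1-1/x) = r*u*(1-1/x) by rw [hrdef]; ring,
      div_eq_mul_one_div (Lp - u) Lp, mul_pow]
    ring
  rw [hRHS]
  have hfacid : (k.factorial : ℝ) = k * (k-1).factorial := by
    exact_mod_cast (Nat.mul_factorial_pred (by omega : k ≠ 0)).symm
  have hLpk : Lp^k = Lp * Lp^(k-1) := by
    rw [← pow_succ']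
    congr 1
    omega
  have hfac1 : (0:ℝ) < (k-1).factorial := by exact_mod_cast (k-1).factorial_pos
  have hk0 : (0:ℝ) < k := by exact_mod_cast hk
  have hE : (0:ℝ) < Real.exp (-(r*Lp)) := Real.exp_pos _
  rw [hcdef]
  field_simp
  ring_nf
  rw [hfacid, hLpk]
  field_simp
  ring
  have hLpne : Lp ^ (k-1) ≠ 0 := by positivity
  rw [inv_pow]
  field_simp
end
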